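/- Let G = (V,w) and G' = (V,w') be weighted graphs on the same vertex set V with |V| = n, and suppose G' is an (α,β)-approximation to cut queries in G with 0 ≤ α ≤ 1/2 and β ≥ 0. Let a ≥ 1 and let T' be a binary tree with leaf set V satisfying ω_{G'}(T') ≤ a·ω_{G'}*. Then ω_G(T') ≤ (1+4α)·a·ω_G* + (4a+4)·β·n². -/

import Mathlib

open Finset

inductive BTree (V : Type) : Type
  | leaf : V → BTree V
  | node : BTree V → BTree V → BTree V
  deriving DecidableEq

namespace BTree

variable {V : Type} [DecidableEq V]

def leavesList : BTree V → List V
  | leaf x => [x]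
  | node L R => L.leavesList ++ R.leavesList

def leaves (T : BTree V) : Finset V :=
  T.leavesList.toFinset

def cluster : BTree V → V → V → Finset V
  | leaf x, _, _ => {x}
  | node L R, u, v =>
    if u ∈ L.leaves ∧ v ∈ L.leaves then L.cluster u v
    else if u ∈ R.leaves ∧ v ∈ R.leaves then R.cluster u v
    else (node L R).leaves

end BTree

section
variable {V : Type} [Fintype V] [DecidableEq V]

def IsHC (T : BTree V) : Prop :=
  T.leavesList.Nodup ∧ T.leaves = Finset.univ

def IsWeight (w : V → V → ℝ) : Prop :=
  (∀ u v, 0 ≤ w u v) ∧ (∀ u v, w u v = w v u) ∧ ∀ u, w u u = 0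

noncomputable def cost (w : V → V → ℝ) (T : BTree V) : ℝ :=
  (1 / 2) * ∑ u : V, ∑ v : V, w u v * ((T.cluster u v).card : ℝ)

noncomputable def optCost (w : V → V → ℝ) : ℝ :=
  sInf {c : ℝ | ∃ T : BTree V, IsHC T ∧ cost w T = c}

noncomputable def graphDist (w w' : V → V → ℝ) : ℝ :=
  (1 / 2) * ∑ u : V, ∑ v : V, |w u v - w' u v|

noncomputable def cutW (w : V → V → ℝ) (A B : Finset V) : ℝ :=
  ∑ a ∈ A, ∑ b ∈ B, w a b

def IsEdgeDP (A : (V → V → ℝ) → PMF (BTree V)) (ε : ℝ) : Prop :=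
  ∀ w w' : V → V → ℝ, IsWeight w → IsWeight w' → graphDist w w' ≤ 1 →
    ∀ S : Set (BTree V),
      (A w').toOuterMeasure S ≤ ENNReal.ofReal (Real.exp ε) * (A w).toOuterMeasure S

end

/-- `G' = (V,w')` is an `(α,β)`-approximation to cut queries in `G = (V,w)`. -/
def CutApprox {V : Type} [Fintype V] [DecidableEq V] (w w' : V → V → ℝ) (α β : ℝ) : Prop :=
  ∀ S : Finset V,
    (1 - α) * cutW w S Sᶜ
        - β * ((min S.card (Fintype.card V - S.card) : ℕ) : ℝ) ≤ cutW w' S Sᶜ ∧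
    cutW w' S Sᶜ ≤ (1 + α) * cutW w S Sᶜ
        + β * ((min S.card (Fintype.card V - S.card) : ℕ) : ℝ)

section AuxHC
set_option linter.unusedSectionVars false
variable {V : Type} [Fintype V] [DecidableEq V]

lemma leaves_node (L R : BTree V) : (BTree.node L R).leaves = L.leaves ∪ R.leaves := by
  simp [BTree.leaves, BTree.leavesList]

lemma nodup_node {L R : BTree V} (h : (BTree.node L R).leavesList.Nodup) :
    L.leavesList.Nodup ∧ R.leavesList.Nodup ∧ Disjoint L.leaves R.leaves := by
  rw [BTree.leavesList, List.nodup_append] at h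
  refine ⟨h.1, h.2.1, ?_⟩
  rw [Finset.disjoint_left]
  intro a haL haR
  exact h.2.2 a (List.mem_toFinset.mp haL) a (List.mem_toFinset.mp haR) rfl

noncomputable def lcost (w : V → V → ℝ) : BTree V → ℝ
  | .leaf _ => 0
  | .node L R => lcost w L + lcost w R
      + (((BTree.node L R).leaves.card : ℝ)) * cutW w L.leaves R.leaves

noncomputable def cutSum (w : V → V → ℝ) : BTree V → ℝ
  | .leaf x => cutW w {x} ({x}ᶜ)
  | .node L R => cutSum w L + cutSum w R
      + (R.leaves.card : ℝ) * cutW w L.leaves (L.leavesᶜ)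
      + (L.leaves.card : ℝ) * cutW w R.leaves (R.leavesᶜ)

noncomputable def msum : BTree V → ℝ
  | .leaf (x : V) => ((min ({x} : Finset V).card (Fintype.card V - ({x} : Finset V).card) : ℕ) : ℝ)
  | .node L R => msum L + msum R
      + (R.leaves.card : ℝ) * ((min L.leaves.card (Fintype.card V - L.leaves.card) : ℕ) : ℝ)
      + (L.leaves.card : ℝ) * ((min R.leaves.card (Fintype.card V - R.leaves.card) : ℕ) : ℝ)

lemma cutW_nonneg {w : V → V → ℝ} (hw : ∀ u v, 0 ≤ w u v) (A B : Finset V) :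
    0 ≤ cutW w A B :=
  Finset.sum_nonneg fun a _ => Finset.sum_nonneg fun b _ => hw a b

lemma cutW_comm {w : V → V → ℝ} (hsymm : ∀ u v, w u v = w v u) (A B : Finset V) :
    cutW w A B = cutW w B A := by
  rw [cutW, cutW, Finset.sum_comm]
  exact Finset.sum_congr rfl fun a _ => Finset.sum_congr rfl fun b _ => hsymm b a

lemma cutW_union_right {w : V → V → ℝ} {B C : Finset V} (h : Disjoint B C) (A : Finset V) :
    cutW w A (B ∪ C) = cutW w A B + cutW w A C := by
  simp [cutW, Finset.sum_union h, Finset.sum_add_distrib]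

lemma cutW_union_left {w : V → V → ℝ} {A B : Finset V} (h : Disjoint A B) (C : Finset V) :
    cutW w (A ∪ B) C = cutW w A C + cutW w B C := by
  simp [cutW, Finset.sum_union h]

lemma compl_eq_union {A B : Finset V} (h : Disjoint A B) :
    Aᶜ = B ∪ (A ∪ B)ᶜ := by
  ext x
  simp only [Finset.mem_compl, Finset.mem_union, not_or]
  constructor
  · intro hxA
    by_cases hxB : x ∈ B
    · exact Or.inl hxB
    · exact Or.inr ⟨hxA, hxB⟩
  · rintro (hxB | ⟨h1, _⟩)
    · exact fun hxA => Finset.disjoint_left.mp h hxA hxB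
    · exact h1

lemma cut_split {w : V → V → ℝ} {A B : Finset V} (h : Disjoint A B) :
    cutW w A Aᶜ = cutW w A B + cutW w A ((A ∪ B)ᶜ) := by
  rw [compl_eq_union h, cutW_union_right]
  exact disjoint_compl_right.mono_left Finset.subset_union_right

lemma cut_add_cut {w : V → V → ℝ} (hsymm : ∀ u v, w u v = w v u)
    {A B : Finset V} (h : Disjoint A B) :
    cutW w A Aᶜ + cutW w B Bᶜ
      = 2 * cutW w A B + cutW w (A ∪ B) ((A ∪ B)ᶜ) := by
  have h1 := cut_split (w := w) h
  have h2 := cut_split (w := w) h.symm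
  rw [Finset.union_comm B A] at h2
  rw [cutW_union_left h, cutW_comm hsymm B A] at *
  linarith

lemma cutSum_eq {w : V → V → ℝ} (hsymm : ∀ u v, w u v = w v u) :
    ∀ T : BTree V, T.leavesList.Nodup →
      cutSum w T = 2 * lcost w T + (T.leaves.card : ℝ) * cutW w T.leaves (T.leavesᶜ)
  | .leaf x, _ => by
      simp [cutSum, lcost, BTree.leaves, BTree.leavesList]
  | .node L R, h => by
      obtain ⟨hL, hR, hdisj⟩ := nodup_node h
      have ihL := cutSum_eq hsymm L hL
      have ihR := cutSum_eq hsymm R hR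
      have hc : ((BTree.node L R).leaves.card : ℝ) = (L.leaves.card : ℝ) + (R.leaves.card : ℝ) := by
        rw [leaves_node, Finset.card_union_of_disjoint hdisj]; push_cast; ring
      have hsplit := cut_add_cut hsymm hdisj
      rw [cutSum, lcost, ihL, ihR, hc, leaves_node]
      nlinarith [hsplit]

lemma pairSum {w : V → V → ℝ} (hsymm : ∀ u v, w u v = w v u) (hdiag : ∀ u, w u u = 0) :
    ∀ T : BTree V, T.leavesList.Nodup →
      ∑ u ∈ T.leaves, ∑ v ∈ T.leaves, w u v * ((T.cluster u v).card : ℝ)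
        = 2 * lcost w T
  | .leaf x, _ => by
      simp [BTree.leaves, BTree.leavesList, BTree.cluster, lcost, hdiag]
  | .node L R, h => by
      obtain ⟨hL, hR, hdisj⟩ := nodup_node h
      have ihL := pairSum hsymm hdiag L hL
      have ihR := pairSum hsymm hdiag R hR
      have hAA : ∀ u ∈ L.leaves, ∀ v ∈ L.leaves,
          (BTree.node L R).cluster u v = L.cluster u v := by
        intro u hu v hv
        rw [BTree.cluster, if_pos ⟨hu, hv⟩]
      have hBB : ∀ u ∈ R.leaves, ∀ v ∈ R.leaves,
          (BTree.node L R).cluster u v = R.cluster u v := by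
        intro u hu v hv
        have hu' : u ∉ L.leaves := Finset.disjoint_right.mp hdisj hu
        rw [BTree.cluster, if_neg (by tauto), if_pos ⟨hu, hv⟩]
      have hAB : ∀ u ∈ L.leaves, ∀ v ∈ R.leaves,
          (BTree.node L R).cluster u v = (BTree.node L R).leaves := by
        intro u hu v hv
        have hv' : v ∉ L.leaves := Finset.disjoint_right.mp hdisj hv
        have hu' : u ∉ R.leaves := Finset.disjoint_left.mp hdisj hu
        rw [BTree.cluster, if_neg (by tauto), if_neg (by tauto)]
      have hBA : ∀ u ∈ R.leaves, ∀ v ∈ L.leaves,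
          (BTree.node L R).cluster u v = (BTree.node L R).leaves := by
        intro u hu v hv
        have hv' : v ∉ R.leaves := Finset.disjoint_left.mp hdisj hv
        have hu' : u ∉ L.leaves := Finset.disjoint_right.mp hdisj hu
        rw [BTree.cluster, if_neg (by tauto), if_neg (by tauto)]
      have key : ∑ u ∈ (BTree.node L R).leaves, ∑ v ∈ (BTree.node L R).leaves,
            w u v * (((BTree.node L R).cluster u v).card : ℝ)
          = (∑ u ∈ L.leaves, ∑ v ∈ L.leaves, w u v * ((L.cluster u v).card : ℝ))
            + (∑ u ∈ R.leaves, ∑ v ∈ R.leaves, w u v * ((R.cluster u v).card : ℝ))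
            + (((BTree.node L R).leaves.card : ℝ)) * cutW w L.leaves R.leaves
            + (((BTree.node L R).leaves.card : ℝ)) * cutW w R.leaves L.leaves := by
        rw [leaves_node, Finset.sum_union hdisj]
        have e1 : ∀ u ∈ L.leaves,
            ∑ v ∈ L.leaves ∪ R.leaves, w u v * (((BTree.node L R).cluster u v).card : ℝ)
              = (∑ v ∈ L.leaves, w u v * ((L.cluster u v).card : ℝ))
                + ∑ v ∈ R.leaves, w u v * (((BTree.node L R).leaves.card : ℝ)) := by
          intro u hu
          rw [Finset.sum_union hdisj]
          congr 1
          · exact Finset.sum_congr rfl fun v hv => by rw [hAA u hu v hv]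
          · exact Finset.sum_congr rfl fun v hv => by rw [hAB u hu v hv]
        have e2 : ∀ u ∈ R.leaves,
            ∑ v ∈ L.leaves ∪ R.leaves, w u v * (((BTree.node L R).cluster u v).card : ℝ)
              = (∑ v ∈ L.leaves, w u v * (((BTree.node L R).leaves.card : ℝ)))
                + ∑ v ∈ R.leaves, w u v * ((R.cluster u v).card : ℝ) := by
          intro u hu
          rw [Finset.sum_union hdisj]
          congr 1
          · exact Finset.sum_congr rfl fun v hv => by rw [hBA u hu v hv]
          · exact Finset.sum_congr rfl fun v hv => by rw [hBB u hu v hv]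
        rw [Finset.sum_congr rfl e1, Finset.sum_congr rfl e2]
        rw [Finset.sum_add_distrib, Finset.sum_add_distrib]
        simp only [← Finset.sum_mul, cutW, leaves_node]
        ring_nf
      rw [key, ihL, ihR, lcost, cutW_comm hsymm R.leaves L.leaves]
      ring

end AuxHC

section AuxHC2
set_option linter.unusedSectionVars false
variable {V : Type} [Fintype V] [DecidableEq V]

lemma msum_le : ∀ T : BTree V, T.leavesList.Nodup → msum T ≤ (T.leaves.card : ℝ) ^ 2
  | .leaf x, _ => by
      have : (min ({x} : Finset V).card (Fintype.card V - ({x} : Finset V).card) : ℕ) ≤ 1 := by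
        simpa using Nat.min_le_left _ _
      simp only [msum, BTree.leaves, BTree.leavesList, List.toFinset_cons, List.toFinset_nil,
        insert_empty_eq, Finset.card_singleton]
      calc ((min ({x} : Finset V).card (Fintype.card V - ({x} : Finset V).card) : ℕ) : ℝ)
          ≤ 1 := by exact_mod_cast this
        _ ≤ ((1:ℕ):ℝ) ^ 2 := by norm_num
  | .node L R, h => by
      obtain ⟨hL, hR, hdisj⟩ := nodup_node h
      have ihL := msum_le L hL
      have ihR := msum_le R hR
      have mA : ((min L.leaves.card (Fintype.card V - L.leaves.card) : ℕ) : ℝ)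
          ≤ (L.leaves.card : ℝ) := by exact_mod_cast Nat.min_le_left _ _
      have mB : ((min R.leaves.card (Fintype.card V - R.leaves.card) : ℕ) : ℝ)
          ≤ (R.leaves.card : ℝ) := by exact_mod_cast Nat.min_le_left _ _
      have hc : ((BTree.node L R).leaves.card : ℝ)
          = (L.leaves.card : ℝ) + (R.leaves.card : ℝ) := by
        rw [leaves_node, Finset.card_union_of_disjoint hdisj]; push_cast; ring
      have hA0 : (0:ℝ) ≤ (L.leaves.card : ℝ) := Nat.cast_nonneg _
      have hB0 : (0:ℝ) ≤ (R.leaves.card : ℝ) := Nat.cast_nonneg _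
      rw [msum, hc]
      nlinarith [mul_le_mul_of_nonneg_left mA hB0, mul_le_mul_of_nonneg_left mB hA0]

lemma lcost_nonneg {w : V → V → ℝ} (hw0 : ∀ u v, 0 ≤ w u v) :
    ∀ T : BTree V, 0 ≤ lcost w T
  | .leaf _ => le_refl 0
  | .node L R => by
      have := lcost_nonneg hw0 L
      have := lcost_nonneg hw0 R
      have := cutW_nonneg hw0 L.leaves R.leaves
      have : (0:ℝ) ≤ (((BTree.node L R).leaves.card : ℝ)) * cutW w L.leaves R.leaves :=
        mul_nonneg (Nat.cast_nonneg _) (cutW_nonneg hw0 _ _)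
      rw [lcost]
      linarith [lcost_nonneg hw0 L, lcost_nonneg hw0 R]

lemma cutSum_diff {w w' : V → V → ℝ} {α β : ℝ}
    (hS : ∀ S : Finset V, |cutW w' S Sᶜ - cutW w S Sᶜ|
          ≤ α * cutW w S Sᶜ + β * ((min S.card (Fintype.card V - S.card) : ℕ) : ℝ)) :
    ∀ T : BTree V, |cutSum w' T - cutSum w T| ≤ α * cutSum w T + β * msum T
  | .leaf x => by
      simpa [cutSum, msum] using hS {x}
  | .node L R => by
      have ihL := cutSum_diff hS L
      have ihR := cutSum_diff hS R
      have hA := hS L.leaves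
      have hB := hS R.leaves
      have hA0 : (0:ℝ) ≤ (L.leaves.card : ℝ) := Nat.cast_nonneg _
      have hB0 : (0:ℝ) ≤ (R.leaves.card : ℝ) := Nat.cast_nonneg _
      have bA := mul_le_mul_of_nonneg_left hA hB0
      have bB := mul_le_mul_of_nonneg_left hB hA0
      rw [cutSum, cutSum, msum]
      have habs : |(cutSum w' L + cutSum w' R
            + (R.leaves.card : ℝ) * cutW w' L.leaves (L.leavesᶜ)
            + (L.leaves.card : ℝ) * cutW w' R.leaves (R.leavesᶜ))
          - (cutSum w L + cutSum w R
            + (R.leaves.card : ℝ) * cutW w L.leaves (L.leavesᶜ)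
            + (L.leaves.card : ℝ) * cutW w R.leaves (R.leavesᶜ))|
          ≤ |cutSum w' L - cutSum w L| + |cutSum w' R - cutSum w R|
            + (R.leaves.card : ℝ) * |cutW w' L.leaves (L.leavesᶜ) - cutW w L.leaves (L.leavesᶜ)|
            + (L.leaves.card : ℝ) * |cutW w' R.leaves (R.leavesᶜ) - cutW w R.leaves (R.leavesᶜ)| := by
        have e : (cutSum w' L + cutSum w' R
            + (R.leaves.card : ℝ) * cutW w' L.leaves (L.leavesᶜ)
            + (L.leaves.card : ℝ) * cutW w' R.leaves (R.leavesᶜ))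
          - (cutSum w L + cutSum w R
            + (R.leaves.card : ℝ) * cutW w L.leaves (L.leavesᶜ)
            + (L.leaves.card : ℝ) * cutW w R.leaves (R.leavesᶜ))
          = (cutSum w' L - cutSum w L) + (cutSum w' R - cutSum w R)
            + (R.leaves.card : ℝ) * (cutW w' L.leaves (L.leavesᶜ) - cutW w L.leaves (L.leavesᶜ))
            + (L.leaves.card : ℝ) * (cutW w' R.leaves (R.leavesᶜ) - cutW w R.leaves (R.leavesᶜ)) := by
          ring
        rw [e]
        calc _ ≤ |(cutSum w' L - cutSum w L) + (cutSum w' R - cutSum w R)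
                + (R.leaves.card : ℝ) * (cutW w' L.leaves (L.leavesᶜ) - cutW w L.leaves (L.leavesᶜ))|
              + |(L.leaves.card : ℝ) * (cutW w' R.leaves (R.leavesᶜ) - cutW w R.leaves (R.leavesᶜ))| :=
            abs_add_le _ _
        _ ≤ _ := by
            have h1 := abs_add_le ((cutSum w' L - cutSum w L) + (cutSum w' R - cutSum w R))
              ((R.leaves.card : ℝ) * (cutW w' L.leaves (L.leavesᶜ) - cutW w L.leaves (L.leavesᶜ)))
            have h2 := abs_add_le (cutSum w' L - cutSum w L) (cutSum w' R - cutSum w R)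
            have h3 := abs_mul ((R.leaves.card:ℝ)) (cutW w' L.leaves (L.leavesᶜ) - cutW w L.leaves (L.leavesᶜ))
            have h4 := abs_mul ((L.leaves.card:ℝ)) (cutW w' R.leaves (R.leavesᶜ) - cutW w R.leaves (R.leavesᶜ))
            rw [abs_of_nonneg hB0] at h3
            rw [abs_of_nonneg hA0] at h4
            linarith
      refine habs.trans ?_
      linarith

end AuxHC2

section AuxHC3
set_option linter.unusedSectionVars false
variable {V : Type} [Fintype V] [DecidableEq V]

lemma cost_nonneg {w : V → V → ℝ} (hw0 : ∀ u v, 0 ≤ w u v) (T : BTree V) :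
    0 ≤ cost w T := by
  apply mul_nonneg (by norm_num)
  exact Finset.sum_nonneg fun u _ => Finset.sum_nonneg fun v _ =>
    mul_nonneg (hw0 u v) (Nat.cast_nonneg _)

lemma cost_eq_lcost {w : V → V → ℝ} (hws : IsWeight w) {T : BTree V} (hT : IsHC T) :
    cost w T = lcost w T := by
  rw [cost, ← hT.2, pairSum hws.2.1 hws.2.2 T hT.1]
  ring

end AuxHC3

/-- If `G'` is an `(α,β)`-approximation to cut queries in `G` with
`0 ≤ α ≤ 1/2`, `β ≥ 0`, and `T'` is an `a`-approximately optimal tree for `G'` (`a ≥ 1`),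
then `ω_G(T') ≤ (1+4α)·a·ω_G* + (4a+4)·β·n²`. -/
theorem approx_transfer_of_cut_approx (V : Type) [Fintype V] [DecidableEq V] (n : ℕ)
    (hcard : Fintype.card V = n) (w w' : V → V → ℝ) (hw : IsWeight w) (hw' : IsWeight w')
    (α β : ℝ) (hα0 : 0 ≤ α) (hα1 : α ≤ 1 / 2) (hβ : 0 ≤ β) (happrox : CutApprox w w' α β)
    (a : ℝ) (ha : 1 ≤ a) (T' : BTree V) (hT' : IsHC T')
    (hopt : cost w' T' ≤ a * optCost w') :
    cost w T' ≤ (1 + 4 * α) * a * optCost w + (4 * a + 4) * β * (n : ℝ) ^ 2 := by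
  have hS : ∀ S : Finset V, |cutW w' S Sᶜ - cutW w S Sᶜ|
      ≤ α * cutW w S Sᶜ + β * ((min S.card (Fintype.card V - S.card) : ℕ) : ℝ) := by
    intro S
    obtain ⟨h1, h2⟩ := happrox S
    rw [abs_le]
    constructor <;> [linarith; linarith]
  have hn2 : (0:ℝ) ≤ β * (n:ℝ)^2 := mul_nonneg hβ (sq_nonneg _)
  have key : ∀ T : BTree V, IsHC T →
      |cost w' T - cost w T| ≤ α * cost w T + β * (n:ℝ)^2 := by
    intro T hT
    have hcut : cutW w T.leaves (T.leavesᶜ) = 0 := by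
      rw [hT.2, Finset.compl_univ]; simp [cutW]
    have hcut' : cutW w' T.leaves (T.leavesᶜ) = 0 := by
      rw [hT.2, Finset.compl_univ]; simp [cutW]
    have e1 := cutSum_eq hw.2.1 T hT.1
    have e2 := cutSum_eq hw'.2.1 T hT.1
    rw [hcut, mul_zero, add_zero] at e1
    rw [hcut', mul_zero, add_zero] at e2
    have hd := cutSum_diff hS T
    rw [e1, e2, ← cost_eq_lcost hw hT, ← cost_eq_lcost hw' hT] at hd
    have habs : |2 * cost w' T - 2 * cost w T| = 2 * |cost w' T - cost w T| := by
      have e : 2 * cost w' T - 2 * cost w T = 2 * (cost w' T - cost w T) := by ring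
      rw [e, abs_mul]
      norm_num
    rw [habs] at hd
    have hms : msum T ≤ (n:ℝ)^2 := by
      have h := msum_le T hT.1
      rwa [hT.2, Finset.card_univ, hcard] at h
    have h3 : β * msum T ≤ β * (n:ℝ)^2 := mul_le_mul_of_nonneg_left hms hβ
    linarith [abs_nonneg (cost w' T - cost w T)]
  have trans1 : ∀ T : BTree V, IsHC T →
      cost w' T ≤ (1 + α) * cost w T + β * (n:ℝ)^2 := by
    intro T hT
    have h := (abs_le.mp (key T hT)).2
    linarith
  have hbdd : BddBelow {c : ℝ | ∃ T : BTree V, IsHC T ∧ cost w T = c} := by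
    refine ⟨0, ?_⟩
    rintro c ⟨T, hT, rfl⟩
    exact cost_nonneg hw.1 T
  have hbdd' : BddBelow {c : ℝ | ∃ T : BTree V, IsHC T ∧ cost w' T = c} := by
    refine ⟨0, ?_⟩
    rintro c ⟨T, hT, rfl⟩
    exact cost_nonneg hw'.1 T
  have hne : Set.Nonempty {c : ℝ | ∃ T : BTree V, IsHC T ∧ cost w T = c} :=
    ⟨cost w T', T', hT', rfl⟩
  have ho : 0 ≤ optCost w := by
    rw [optCost]
    apply Real.sInf_nonneg
    rintro c ⟨T, hT, rfl⟩
    exact cost_nonneg hw.1 T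
  have hstep : ∀ c ∈ {c : ℝ | ∃ T : BTree V, IsHC T ∧ cost w T = c},
      optCost w' ≤ (1 + α) * c + β * (n:ℝ)^2 := by
    rintro c ⟨T, hT, rfl⟩
    have h1 : optCost w' ≤ cost w' T := csInf_le hbdd' ⟨T, hT, rfl⟩
    exact h1.trans (trans1 T hT)
  have hoo : optCost w' ≤ (1 + α) * optCost w + β * (n:ℝ)^2 := by
    have h2 : (optCost w' - β * (n:ℝ)^2) / (1 + α) ≤ optCost w := by
      rw [optCost]
      apply le_csInf hne
      intro c hc
      rw [div_le_iff₀ (by linarith : (0:ℝ) < 1 + α)]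
      have h := hstep c hc
      rw [optCost] at h
      linarith
    rw [div_le_iff₀ (by linarith : (0:ℝ) < 1 + α)] at h2
    linarith
  have ha0 : (0:ℝ) ≤ a := by linarith
  have h1α : (0:ℝ) < 1 - α := by linarith
  have hlow := (abs_le.mp (key T' hT')).1
  have hao' : a * optCost w' ≤ a * ((1 + α) * optCost w + β * (n:ℝ)^2) :=
    mul_le_mul_of_nonneg_left hoo ha0
  have expand : a * ((1 + α) * optCost w + β * (n:ℝ)^2)
      = a * ((1 + α) * optCost w) + a * (β * (n:ℝ)^2) := by ring
  have expand2 : (1 - α) * cost w T' = cost w T' - α * cost w T' := by ring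
  have e1 : (1 - α) * cost w T'
      ≤ a * ((1 + α) * optCost w) + (a + 1) * (β * (n:ℝ)^2) := by
    rw [expand] at hao'
    linarith
  have h12 : (0:ℝ) ≤ 1 - 2 * α := by linarith
  have hint1 : (0:ℝ) ≤ (α * (1 - 2 * α)) * (a * optCost w) :=
    mul_nonneg (mul_nonneg hα0 h12) (mul_nonneg ha0 ho)
  have h5 : (0:ℝ) ≤ (1 - 2 * α) * (a + 1) := mul_nonneg h12 (by linarith)
  have h6 : (0:ℝ) ≤ 3 * a + 3 - 4 * α * (a + 1) := by nlinarith [h5]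
  have hint2 : (0:ℝ) ≤ (3 * a + 3 - 4 * α * (a + 1)) * (β * (n:ℝ)^2) :=
    mul_nonneg h6 hn2
  have e2 : a * ((1 + α) * optCost w) + (a + 1) * (β * (n:ℝ)^2)
      ≤ (1 - α) * ((1 + 4 * α) * a * optCost w + (4 * a + 4) * β * (n:ℝ)^2) := by
    nlinarith [hint1, hint2]
  exact (mul_le_mul_iff_right₀ h1α).mp (e1.trans e2)
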